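/- Let T < 0 and let H, φ : ℝ → ℝ be continuously differentiable on [T, 0] with H(0) = β > 0. If H'(t) − 3·H(t)^4·exp(φ(t)) + H(t)^2 < 0 for all t ∈ (T, 0), then H(t) > 0 for all t ∈ [T, 0). -/

import Mathlib

/-- Backward-in-time positivity of the Hubble parameter: if `H, φ` are
continuously differentiable on `[T, 0]` with `H(0) = β > 0` and
`D₃ = H' − 3H⁴e^φ + H² < 0` on `(T, 0)`, then `H > 0` on `[T, 0)`. -/
theorem stmt_13 (T β : ℝ) (hT : T < 0) (H φ : ℝ → ℝ)
    (hH : ContDiffOn ℝ 1 H (Set.Icc T 0)) (hφ : ContDiffOn ℝ 1 φ (Set.Icc T 0))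
    (h0 : H 0 = β) (hβ : 0 < β)
    (hD : ∀ t ∈ Set.Ioo T 0,
      deriv H t - 3 * H t ^ 4 * Real.exp (φ t) + H t ^ 2 < 0) :
    ∀ t ∈ Set.Ico T 0, 0 < H t := by
  have hHc : ContinuousOn H (Set.Icc T 0) := hH.continuousOn
  have hφc : ContinuousOn φ (Set.Icc T 0) := hφ.continuousOn
  -- bound for exp ∘ φ on the compact interval
  obtain ⟨m, hm, hmmax⟩ := isCompact_Icc.exists_isMaxOn ⟨0, le_of_lt hT, le_refl 0⟩ hφc
  set C : ℝ := Real.exp (φ m) with hCdef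
  have hC : 0 < C := Real.exp_pos _
  by_contra hcon
  push_neg at hcon
  obtain ⟨t, ht, htH⟩ := hcon
  have htT : T ≤ t := ht.1
  have ht0 : t < 0 := ht.2
  set S : Set ℝ := Set.Icc t 0 ∩ H ⁻¹' Set.Iic 0 with hSdef
  have hSsub : S ⊆ Set.Icc t 0 := Set.inter_subset_left
  have hSsub' : S ⊆ Set.Icc T 0 := hSsub.trans (Set.Icc_subset_Icc_left htT)
  have hSne : S.Nonempty := ⟨t, ⟨le_refl t, le_of_lt ht0⟩, htH⟩
  have hSbdd : BddAbove S := ⟨0, fun x hx => (hSsub hx).2⟩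
  have hSclosed : IsClosed S :=
    (hHc.mono (Set.Icc_subset_Icc_left htT)).preimage_isClosed_of_isClosed
      isClosed_Icc isClosed_Iic
  have hScomp : IsCompact S := isCompact_Icc.of_isClosed_subset hSclosed hSsub
  set t₀ : ℝ := sSup S with ht₀def
  have ht₀S : t₀ ∈ S := (hScomp.isGreatest_sSup hSne).1
  have ht₀le : H t₀ ≤ 0 := ht₀S.2
  have ht₀Icc : t₀ ∈ Set.Icc T 0 := hSsub' ht₀S
  have ht₀0 : t₀ < 0 := by
    rcases lt_or_eq_of_le ht₀Icc.2 with h | h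
    · exact h
    · exfalso; rw [h, h0] at ht₀le; linarith
  -- H is positive on (t₀, 0]
  have hpos : ∀ s ∈ Set.Ioc t₀ 0, 0 < H s := by
    intro s hs
    by_contra hns
    push_neg at hns
    have hsS : s ∈ S := ⟨⟨le_trans (ht₀S.1.1) (le_of_lt hs.1), hs.2⟩, hns⟩
    exact absurd (le_csSup hSbdd hsS) (not_le_of_gt hs.1)
  -- H t₀ = 0
  have ht₀eq : H t₀ = 0 := by
    refine le_antisymm ht₀le ?_
    have hcw : ContinuousWithinAt H (Set.Ioc t₀ 0) t₀ :=
      (hHc t₀ ht₀Icc).mono (Set.Ioc_subset_Icc_self.trans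
        (Set.Icc_subset_Icc_left ht₀Icc.1))
    haveI : (nhdsWithin t₀ (Set.Ioc t₀ 0)).NeBot := left_nhdsWithin_Ioc_neBot ht₀0
    refine ge_of_tendsto hcw ?_
    filter_upwards [self_mem_nhdsWithin] with s hs
    exact le_of_lt (hpos s hs)
  -- choose ε with 3 ε² C ≤ 1
  set ε : ℝ := Real.sqrt (1 / (3 * C)) with hεdef
  have hε : 0 < ε := Real.sqrt_pos.2 (by positivity)
  have hε2 : 3 * ε ^ 2 * C ≤ 1 := by
    rw [hεdef, Real.sq_sqrt (by positivity : (0:ℝ) ≤ 1 / (3 * C))]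
    have h3C : (3 : ℝ) * C ≠ 0 := by positivity
    field_simp
    exact le_rfl
  -- continuity at t₀ gives a δ
  have hcw : ContinuousWithinAt H (Set.Icc T 0) t₀ := hHc t₀ ht₀Icc
  have : ∀ᶠ s in nhdsWithin t₀ (Set.Icc T 0), |H s| < ε := by
    have := hcw.tendsto (Metric.ball_mem_nhds (H t₀) hε)
    filter_upwards [this] with s hs
    rw [Set.mem_preimage, Metric.mem_ball, Real.dist_eq, ht₀eq, sub_zero] at hs
    exact hs
  rw [Filter.eventually_iff, Metric.mem_nhdsWithin_iff] at this
  obtain ⟨δ, hδ, hδH⟩ := this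
  -- pick s₁ ∈ (t₀, 0) within δ/2
  set s₁ : ℝ := min (t₀ + δ / 2) (t₀ / 2) with hs₁def
  have hs₁gt : t₀ < s₁ := lt_min (by linarith) (by linarith)
  have hs₁lt : s₁ < 0 := lt_of_le_of_lt (min_le_right _ _) (by linarith)
  have hs₁Icc : Set.Icc t₀ s₁ ⊆ Set.Icc T 0 := by
    intro u hu
    exact ⟨le_trans ht₀Icc.1 hu.1, le_trans hu.2 (le_of_lt hs₁lt)⟩
  have hsmall : ∀ u ∈ Set.Icc t₀ s₁, |H u| < ε := by
    intro u hu
    refine hδH ⟨?_, hs₁Icc hu⟩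
    rw [Metric.mem_ball, Real.dist_eq, abs_of_nonneg (by linarith [hu.1])]
    have : u ≤ t₀ + δ / 2 := le_trans hu.2 (min_le_left _ _)
    linarith
  -- deriv H < 0 on the interior
  have hderiv : ∀ u ∈ Set.Ioo t₀ s₁, deriv H u < 0 := by
    intro u hu
    have huIoo : u ∈ Set.Ioo T 0 :=
      ⟨lt_of_le_of_lt ht₀Icc.1 hu.1, lt_trans hu.2 hs₁lt⟩
    have hDu := hD u huIoo
    have hHu : 0 < H u := hpos u ⟨hu.1, le_of_lt huIoo.2⟩
    have hHuε : H u < ε := by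
      have := hsmall u ⟨le_of_lt hu.1, le_of_lt hu.2⟩
      exact lt_of_le_of_lt (le_abs_self _) this
    have hφu : Real.exp (φ u) ≤ C :=
      Real.exp_le_exp.2 (hmmax (hs₁Icc ⟨le_of_lt hu.1, le_of_lt hu.2⟩))
    have key : 3 * H u ^ 4 * Real.exp (φ u) ≤ H u ^ 2 := by
      have h1 : 3 * H u ^ 4 * Real.exp (φ u) ≤ 3 * H u ^ 4 * C := by
        have : (0:ℝ) ≤ 3 * H u ^ 4 := by positivity
        exact mul_le_mul_of_nonneg_left hφu this
      have h2 : 3 * H u ^ 4 * C ≤ 3 * ε ^ 2 * C * H u ^ 2 := by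
        have hle : H u ^ 2 ≤ ε ^ 2 := by
          have := sq_le_sq' (by linarith) (le_of_lt hHuε)
          simpa using this
        have h := mul_le_mul_of_nonneg_left hle
          (show (0:ℝ) ≤ 3 * C * H u ^ 2 by positivity)
        nlinarith [h]
      have h3 : 3 * ε ^ 2 * C * H u ^ 2 ≤ H u ^ 2 := by
        nlinarith [sq_nonneg (H u)]
      linarith
    linarith
  -- strict antitonicity forces H s₁ < H t₀ = 0, contradiction
  have hanti : StrictAntiOn H (Set.Icc t₀ s₁) := by
    refine strictAntiOn_of_deriv_neg (convex_Icc _ _) (hHc.mono hs₁Icc) ?_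
    intro u hu
    rw [interior_Icc] at hu
    exact hderiv u hu
  have := hanti ⟨le_refl t₀, le_of_lt hs₁gt⟩ ⟨le_of_lt hs₁gt, le_refl s₁⟩ hs₁gt
  rw [ht₀eq] at this
  exact absurd (hpos s₁ ⟨hs₁gt, le_of_lt hs₁lt⟩) (not_lt_of_gt this)
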